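/- Let A be a Hopf algebra, B a left coideal subalgebra, and δ an equivariant derivation of B. Then the right ideal R_δ of B⁺ satisfies Δ̄(R_δ) ⊆ Ā ⊗ R_δ, where Ā = A/(B⁺A) and Δ̄ = (π ⊗ id)∘Δ with π : A → Ā the canonical projection. -/

import Mathlib

open TensorProduct

noncomputable section

/-- A derivation of an algebra `B` into a `B`-bimodule `M`. -/
structure BimodDeriv (B M : Type) [Ring B] [Algebra ℂ B]
    [AddCommGroup M] [Module ℂ M] where
  l : B →ₗ[ℂ] M →ₗ[ℂ] M
  r : B →ₗ[ℂ] M →ₗ[ℂ] M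
  l_mul : ∀ a b m, l (a * b) m = l a (l b m)
  l_one : ∀ m, l 1 m = m
  r_mul : ∀ a b m, r (a * b) m = r b (r a m)
  r_one : ∀ m, r 1 m = m
  lr_comm : ∀ a b m, l a (r b m) = r b (l a m)
  d : B →ₗ[ℂ] M
  leibniz : ∀ a b, d (a * b) = l a (d b) + r b (d a)

variable (A : Type) [Ring A] [HopfAlgebra ℂ A] (B : Subalgebra ℂ A)

/-- The counit of `A` restricted to `B`. -/
def epsB : ↥B →ₐ[ℂ] ℂ := (Bialgebra.counitAlgHom ℂ A).comp B.val

/-- `B⁺ = B ∩ ker ε`. -/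
def Bplus : Submodule ℂ ↥B := LinearMap.ker (epsB A B).toLinearMap

/-- `b ↦ b⁺ = b − ε(b)1`. -/
def plusB : ↥B →ₗ[ℂ] ↥B :=
  LinearMap.id - (Algebra.linearMap ℂ ↥B).comp (epsB A B).toLinearMap

/-- The right ideal `B⁺A` of `A`. -/
def BplusA : Submodule ℂ A :=
  Submodule.span ℂ {x : A | ∃ b : ↥B, epsB A B b = 0 ∧ ∃ a : A, x = (b : A) * a}

/-- `Δ̄ = (π ⊗ id)∘Δ : A → Ā ⊗ A`, with `π : A → Ā = A/(B⁺A)`. -/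
def DeltaBar : A →ₗ[ℂ] (A ⧸ BplusA A B) ⊗[ℂ] A :=
  (TensorProduct.map (BplusA A B).mkQ LinearMap.id) ∘ₗ Coalgebra.comul

variable (comulB : ↥B →ₗ[ℂ] A ⊗[ℂ] ↥B)

/-- The Sweedler-type map `a ⊗ b ↦ a₍₁₎b₍₁₎ ⊗ a₍₂₎·δ(b₍₂₎)`. -/
def sweedlerMap {M : Type} [AddCommGroup M] [Module ℂ M]
    (δ : BimodDeriv ↥B M) : ↥B ⊗[ℂ] ↥B →ₗ[ℂ] A ⊗[ℂ] M :=
  (TensorProduct.map (LinearMap.mul' ℂ A)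
      (TensorProduct.lift
        (LinearMap.mk₂ ℂ (fun a b => δ.l a (δ.d b))
          (fun a a' b => by simp)
          (fun c a b => by simp)
          (fun a b b' => by simp)
          (fun c a b => by simp)))) ∘ₗ
    (TensorProduct.tensorTensorTensorComm ℂ A ↥B A ↥B).toLinearMap ∘ₗ
    (TensorProduct.map comulB comulB)

/-- Equivariance of a derivation of the left coideal subalgebra `B`. -/
def IsEquivariant {M : Type} [AddCommGroup M] [Module ℂ M]
    (δ : BimodDeriv ↥B M) : Prop :=
  ∀ L : List (↥B × ↥B),
    (L.map fun p => δ.l p.1 (δ.d p.2)).sum = 0 →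
    (L.map fun p => sweedlerMap A B comulB δ (p.1 ⊗ₜ[ℂ] p.2)).sum = 0

/-- `R_δ = { Σᵢ ε(aᵢ)bᵢ⁺ : Σᵢ aᵢ·δ(bᵢ) = 0 }`. -/
def RdeltaSet {M : Type} [AddCommGroup M] [Module ℂ M]
    (δ : BimodDeriv ↥B M) : Set ↥B :=
  {x | ∃ L : List (↥B × ↥B),
    (L.map fun p => δ.l p.1 (δ.d p.2)).sum = 0 ∧
    x = (L.map fun p => epsB A B p.1 • plusB A B p.2).sum}

section Aux

lemma epsB_plusB (b : ↥B) : epsB A B (plusB A B b) = 0 := by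
  simp [plusB, epsB]

lemma coe_plusB (b : ↥B) : ((plusB A B b : ↥B) : A) = (b : A) - epsB A B b • 1 := by
  simp [plusB, Algebra.smul_def]

lemma mkQ_coe_mul (b : ↥B) (y : A) :
    (BplusA A B).mkQ ((b : A) * y) = epsB A B b • (BplusA A B).mkQ y := by
  rw [← sub_eq_zero, ← map_smul, ← map_sub, Submodule.mkQ_apply,
    Submodule.Quotient.mk_eq_zero]
  refine Submodule.subset_span ⟨plusB A B b, epsB_plusB A B b, y, ?_⟩
  rw [coe_plusB, sub_mul, smul_mul_assoc, one_mul]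

end Aux

section Aux2

lemma lTensor_epsB_comulB
    (hcomulB : ∀ b : ↥B,
      (TensorProduct.map LinearMap.id B.val.toLinearMap) (comulB b)
        = Coalgebra.comul (b : A))
    (b : ↥B) :
    (epsB A B).toLinearMap.lTensor A (comulB b) = (b : A) ⊗ₜ[ℂ] (1 : ℂ) := by
  have h1 : (epsB A B).toLinearMap
      = (Coalgebra.counit : A →ₗ[ℂ] ℂ) ∘ₗ B.val.toLinearMap := rfl
  have h2 : B.val.toLinearMap.lTensor A
      = TensorProduct.map LinearMap.id B.val.toLinearMap := rfl
  rw [h1, LinearMap.lTensor_comp, LinearMap.comp_apply, h2, hcomulB,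
    Coalgebra.lTensor_counit_comul]

lemma deltaBar_coe
    (hcomulB : ∀ b : ↥B,
      (TensorProduct.map LinearMap.id B.val.toLinearMap) (comulB b)
        = Coalgebra.comul (b : A))
    (b : ↥B) :
    DeltaBar A B (b : A)
      = TensorProduct.map (BplusA A B).mkQ B.val.toLinearMap (comulB b) := by
  rw [DeltaBar, LinearMap.comp_apply, ← hcomulB, ← LinearMap.comp_apply,
    ← TensorProduct.map_comp]
  simp

lemma deltaBar_plusB
    (hcomulB : ∀ b : ↥B,
      (TensorProduct.map LinearMap.id B.val.toLinearMap) (comulB b)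
        = Coalgebra.comul (b : A))
    (b : ↥B) :
    DeltaBar A B ((plusB A B b : ↥B) : A)
      = TensorProduct.map (BplusA A B).mkQ
          (B.val.toLinearMap ∘ₗ plusB A B) (comulB b) := by
  -- split plusB
  have hsplit : B.val.toLinearMap ∘ₗ plusB A B
      = B.val.toLinearMap - (Algebra.linearMap ℂ A) ∘ₗ (epsB A B).toLinearMap := by
    ext c
    simp [plusB, Algebra.smul_def]
  have hmap : TensorProduct.map (BplusA A B).mkQ (B.val.toLinearMap ∘ₗ plusB A B)
      = TensorProduct.map (BplusA A B).mkQ B.val.toLinearMap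
        - TensorProduct.map (BplusA A B).mkQ
            ((Algebra.linearMap ℂ A) ∘ₗ (epsB A B).toLinearMap) := by
    rw [hsplit, ← LinearMap.lTensor_comp_rTensor, ← LinearMap.lTensor_comp_rTensor,
      ← LinearMap.lTensor_comp_rTensor, LinearMap.lTensor_sub, LinearMap.sub_comp]
  have hunit : TensorProduct.map (BplusA A B).mkQ
        ((Algebra.linearMap ℂ A) ∘ₗ (epsB A B).toLinearMap) (comulB b)
      = epsB A B b • ((BplusA A B).mkQ 1 ⊗ₜ[ℂ] (1 : A)) := by
    have : TensorProduct.map (BplusA A B).mkQ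
          ((Algebra.linearMap ℂ A) ∘ₗ (epsB A B).toLinearMap)
        = TensorProduct.map (BplusA A B).mkQ (Algebra.linearMap ℂ A)
            ∘ₗ (epsB A B).toLinearMap.lTensor A := by
      have h := TensorProduct.map_comp (BplusA A B).mkQ (Algebra.linearMap ℂ A)
        LinearMap.id (epsB A B).toLinearMap
      simp only [LinearMap.comp_id] at h
      exact h
    rw [this, LinearMap.comp_apply, lTensor_epsB_comulB A B comulB hcomulB b,
      TensorProduct.map_tmul]
    have : (BplusA A B).mkQ (b : A) = epsB A B b • (BplusA A B).mkQ 1 := by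
      simpa using mkQ_coe_mul A B b 1

    simp [this, TensorProduct.smul_tmul', Algebra.linearMap_apply]
  have hcoe : ((plusB A B b : ↥B) : A) = (b : A) - epsB A B b • (1 : A) := by
    rw [coe_plusB]
  rw [hcoe, map_sub, map_smul, hmap, LinearMap.sub_apply, hunit,
    deltaBar_coe A B comulB hcomulB b]
  congr 1
  -- DeltaBar 1 = mkQ 1 ⊗ 1
  rw [DeltaBar, LinearMap.comp_apply]
  have h1 : (Coalgebra.comul (R := ℂ) (1 : A)) = (1 : A) ⊗ₜ[ℂ] (1 : A) := by
    simpa [Algebra.TensorProduct.one_def] using Bialgebra.comul_one ℂ A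
  rw [h1]
  simp

end Aux2

/-- `a ⊗ b ↦ ε(a) • b⁺`. -/
def gPrime : ↥B ⊗[ℂ] ↥B →ₗ[ℂ] ↥B :=
  TensorProduct.lift (LinearMap.mk₂ ℂ (fun a b => epsB A B a • plusB A B b)
    (fun a a' b => by simp [add_smul])
    (fun c a b => by simp [smul_smul])
    (fun a b b' => by simp [smul_add])
    (fun c a b => by simp [smul_smul, mul_comm]))

/-- `a ⊗ c ↦ ε(c) • a`. -/
def contractAB : A ⊗[ℂ] ↥B →ₗ[ℂ] A :=
  (TensorProduct.rid ℂ A).toLinearMap ∘ₗ (epsB A B).toLinearMap.lTensor A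

lemma contractAB_tmul (a : A) (c : ↥B) :
    contractAB A B (a ⊗ₜ[ℂ] c) = epsB A B c • a := by
  simp [contractAB]

/-- The composite map appearing in the Sweedler computation, with `gPrime`. -/
def keyL : (A ⊗[ℂ] ↥B) ⊗[ℂ] (A ⊗[ℂ] ↥B) →ₗ[ℂ] (A ⧸ BplusA A B) ⊗[ℂ] A :=
  (TensorProduct.map (BplusA A B).mkQ B.val.toLinearMap) ∘ₗ
  (TensorProduct.map (LinearMap.mul' ℂ A) (gPrime A B)) ∘ₗ
  (TensorProduct.tensorTensorTensorComm ℂ A ↥B A ↥B).toLinearMap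

lemma key_uv (u v : A ⊗[ℂ] ↥B) :
    keyL A B (u ⊗ₜ[ℂ] v)
    = TensorProduct.map ((BplusA A B).mkQ ∘ₗ LinearMap.mulLeft ℂ (contractAB A B u))
        (B.val.toLinearMap ∘ₗ plusB A B) v := by
  have hadd : ∀ (a₁ a₂ : A) (w : A ⊗[ℂ] ↥B),
      TensorProduct.map ((BplusA A B).mkQ ∘ₗ LinearMap.mulLeft ℂ (a₁ + a₂))
        (B.val.toLinearMap ∘ₗ plusB A B) w
      = TensorProduct.map ((BplusA A B).mkQ ∘ₗ LinearMap.mulLeft ℂ a₁)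
          (B.val.toLinearMap ∘ₗ plusB A B) w
        + TensorProduct.map ((BplusA A B).mkQ ∘ₗ LinearMap.mulLeft ℂ a₂)
            (B.val.toLinearMap ∘ₗ plusB A B) w := by
    intro a₁ a₂ w
    have h : LinearMap.mulLeft ℂ (a₁ + a₂)
        = LinearMap.mulLeft ℂ a₁ + LinearMap.mulLeft ℂ a₂ :=
      LinearMap.ext fun x => add_mul a₁ a₂ x
    rw [h, LinearMap.comp_add, TensorProduct.map_add_left, LinearMap.add_apply]
  induction u using TensorProduct.induction_on with
  | zero =>
    have h : LinearMap.mulLeft ℂ (contractAB A B (0 : A ⊗[ℂ] ↥B)) = 0 := by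
      rw [(contractAB A B).map_zero]; exact LinearMap.ext fun x => zero_mul x
    rw [h, LinearMap.comp_zero, TensorProduct.map_zero_left,
      TensorProduct.zero_tmul, LinearMap.map_zero, LinearMap.zero_apply]
  | tmul α c =>
    induction v using TensorProduct.induction_on with
    | zero => rw [TensorProduct.tmul_zero, LinearMap.map_zero, LinearMap.map_zero]
    | tmul β d =>
      rw [keyL]
      simp only [LinearMap.comp_apply, LinearEquiv.coe_coe,
        TensorProduct.tensorTensorTensorComm_tmul, TensorProduct.map_tmul,
        contractAB_tmul]
      simp [gPrime, LinearMap.mul'_apply, TensorProduct.smul_tmul',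
        LinearMap.mulLeft_apply, mkQ_coe_mul, smul_mul_assoc,
        TensorProduct.tmul_smul]
    | add v₁ v₂ h₁ h₂ =>
      rw [TensorProduct.tmul_add, LinearMap.map_add, LinearMap.map_add, h₁, h₂]
  | add u₁ u₂ h₁ h₂ =>
    rw [TensorProduct.add_tmul, LinearMap.map_add, h₁, h₂, (contractAB A B).map_add, hadd]

lemma contract_comulB
    (hcomulB : ∀ b : ↥B,
      (TensorProduct.map LinearMap.id B.val.toLinearMap) (comulB b)
        = Coalgebra.comul (b : A))
    (a : ↥B) : contractAB A B (comulB a) = (a : A) := by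
  rw [contractAB, LinearMap.comp_apply, lTensor_epsB_comulB A B comulB hcomulB a]
  simp

lemma keyL_pair
    (hcomulB : ∀ b : ↥B,
      (TensorProduct.map LinearMap.id B.val.toLinearMap) (comulB b)
        = Coalgebra.comul (b : A))
    (a b : ↥B) :
    keyL A B (comulB a ⊗ₜ[ℂ] comulB b)
      = epsB A B a • TensorProduct.map (BplusA A B).mkQ
          (B.val.toLinearMap ∘ₗ plusB A B) (comulB b) := by
  rw [key_uv, contract_comulB A B comulB hcomulB]
  have h : (BplusA A B).mkQ ∘ₗ LinearMap.mulLeft ℂ (a : A)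
      = epsB A B a • (BplusA A B).mkQ :=
    LinearMap.ext fun y => by
      simp only [LinearMap.comp_apply, LinearMap.mulLeft_apply, LinearMap.smul_apply]
      exact mkQ_coe_mul A B a y
  rw [h, TensorProduct.map_smul_left, LinearMap.smul_apply]

variable {M : Type} [AddCommGroup M] [Module ℂ M]

/-- `a ⊗ b ↦ a · δ(b)`, the lift inside `sweedlerMap`. -/
def gDer (δ : BimodDeriv ↥B M) : ↥B ⊗[ℂ] ↥B →ₗ[ℂ] M :=
  TensorProduct.lift
    (LinearMap.mk₂ ℂ (fun a b => δ.l a (δ.d b))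
      (fun a a' b => by simp)
      (fun c a b => by simp)
      (fun a b b' => by simp)
      (fun c a b => by simp))

/-- `a ⊗ b ↦ a₍₁₎b₍₁₎ ⊗ (a₍₂₎ ⊗ b₍₂₎)`. -/
def vPair (a b : ↥B) : A ⊗[ℂ] (↥B ⊗[ℂ] ↥B) :=
  (LinearMap.mul' ℂ A).rTensor (↥B ⊗[ℂ] ↥B)
    ((TensorProduct.tensorTensorTensorComm ℂ A ↥B A ↥B)
      (comulB a ⊗ₜ[ℂ] comulB b))

lemma sweedler_eq (δ : BimodDeriv ↥B M) (a b : ↥B) :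
    sweedlerMap A B comulB δ (a ⊗ₜ[ℂ] b)
      = (gDer A B δ).lTensor A (vPair A B comulB a b) := by
  show (TensorProduct.map (LinearMap.mul' ℂ A) (gDer A B δ))
      ((TensorProduct.tensorTensorTensorComm ℂ A ↥B A ↥B)
        ((TensorProduct.map comulB comulB) (a ⊗ₜ[ℂ] b)))
    = (gDer A B δ).lTensor A (vPair A B comulB a b)
  rw [TensorProduct.map_tmul, ← LinearMap.lTensor_comp_rTensor, LinearMap.comp_apply]
  rfl

lemma keyL_eq (a b : ↥B) :
    keyL A B (comulB a ⊗ₜ[ℂ] comulB b)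
      = TensorProduct.map (BplusA A B).mkQ B.val.toLinearMap
          ((gPrime A B).lTensor A (vPair A B comulB a b)) := by
  rw [keyL, LinearMap.comp_apply, LinearMap.comp_apply, LinearEquiv.coe_coe]
  congr 1
  rw [← LinearMap.lTensor_comp_rTensor, LinearMap.comp_apply]
  rfl

lemma exists_list_repr (t : ↥B ⊗[ℂ] ↥B) :
    ∃ L : List (↥B × ↥B), t = (L.map fun p => p.1 ⊗ₜ[ℂ] p.2).sum := by
  induction t using TensorProduct.induction_on with
  | zero => exact ⟨[], rfl⟩
  | tmul a b => exact ⟨[(a, b)], by simp⟩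
  | add t₁ t₂ h₁ h₂ =>
    obtain ⟨L₁, h₁⟩ := h₁
    obtain ⟨L₂, h₂⟩ := h₂
    exact ⟨L₁ ++ L₂, by simp [h₁, h₂]⟩

lemma gPrime_mem_Rdelta (δ : BimodDeriv ↥B M)
    (t : ↥B ⊗[ℂ] ↥B) (ht : gDer A B δ t = 0) :
    gPrime A B t ∈ RdeltaSet A B δ := by
  obtain ⟨L, hL⟩ := exists_list_repr A B t
  refine ⟨L, ?_, ?_⟩
  · have : gDer A B δ t = (L.map fun p => δ.l p.1 (δ.d p.2)).sum := by
      rw [hL, map_list_sum, List.map_map]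
      exact congrArg List.sum (List.map_congr_left fun p _ => by simp [gDer])
    rw [← this, ht]
  · have : gPrime A B t = (L.map fun p => epsB A B p.1 • plusB A B p.2).sum := by
      rw [hL, map_list_sum, List.map_map]
      exact congrArg List.sum (List.map_congr_left fun p _ => by simp [gPrime])
    rw [this]

lemma exact_helper {G H : Type} [AddCommGroup G] [AddCommGroup H]
    [Module ℂ G] [Module ℂ H] (X : Type) [AddCommGroup X] [Module ℂ X]
    [Module.Free ℂ X] (g : G →ₗ[ℂ] H) (v : X ⊗[ℂ] G)
    (hv : g.lTensor X v = 0) :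
    ∃ v' : X ⊗[ℂ] ↥(LinearMap.ker g),
      (LinearMap.ker g).subtype.lTensor X v' = v := by
  haveI : Module.Flat ℂ X := Module.Flat.of_free
  exact (Module.Flat.lTensor_exact X (LinearMap.exact_subtype_ker_map g) v).mp hv

set_option synthInstance.maxHeartbeats 1000000 in
set_option maxHeartbeats 2000000 in
/-- Theorem 1 (ii), second part: If `δ` is an *equivariant*
derivation of the left coideal subalgebra `B`, then the right ideal `R_δ`
of `B⁺` satisfies `Δ̄(R_δ) ⊆ Ā ⊗ R_δ`, where `Ā = A/(B⁺A)` and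
`Δ̄ = (π ⊗ id)∘Δ`. -/
theorem DeltaBar_RdeltaSet_subset
    (hcomulB : ∀ b : ↥B,
      (TensorProduct.map LinearMap.id B.val.toLinearMap) (comulB b)
        = Coalgebra.comul (b : A))
    {M : Type} [AddCommGroup M] [Module ℂ M]
    (δ : BimodDeriv ↥B M)
    (hequi : IsEquivariant A B comulB δ) :
    ∀ x ∈ RdeltaSet A B δ,
      DeltaBar A B ((x : ↥B) : A) ∈
        LinearMap.range (TensorProduct.map
          (LinearMap.id : (A ⧸ BplusA A B) →ₗ[ℂ] (A ⧸ BplusA A B))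
          (Submodule.span ℂ (B.val '' RdeltaSet A B δ)).subtype) := by
  rintro x ⟨L, hL0, hx⟩
  set s := Submodule.span ℂ (B.val '' RdeltaSet A B δ) with hs
  set V : A ⊗[ℂ] (↥B ⊗[ℂ] ↥B) :=
    (L.map fun p => vPair A B comulB p.1 p.2).sum with hV
  -- equivariance gives that `V` is killed by `lTensor gDer`
  have hE : (gDer A B δ).lTensor A V = 0 := by
    rw [hV, map_list_sum, List.map_map, ← hequi L hL0]
    exact congrArg List.sum (List.map_congr_left fun p _ =>
      (sweedler_eq A B comulB δ p.1 p.2).symm)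
  -- exactness of tensoring with `A` over the field `ℂ`
  obtain ⟨V', hV'⟩ := exact_helper A (gDer A B δ) V hE
  -- the restricted second-leg map, landing in `span (val '' R_δ)`
  have hq : ∀ t : ↥(LinearMap.ker (gDer A B δ)),
      (B.val.toLinearMap ∘ₗ gPrime A B ∘ₗ
        (LinearMap.ker (gDer A B δ)).subtype) t ∈ s := fun t =>
    Submodule.subset_span ⟨gPrime A B (t : ↥B ⊗[ℂ] ↥B),
      gPrime_mem_Rdelta A B δ (t : ↥B ⊗[ℂ] ↥B) t.2, rfl⟩
  set q : ↥(LinearMap.ker (gDer A B δ)) →ₗ[ℂ] ↥s :=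
    LinearMap.codRestrict s
      (B.val.toLinearMap ∘ₗ gPrime A B ∘ₗ (LinearMap.ker (gDer A B δ)).subtype)
      hq with hqdef
  refine ⟨TensorProduct.map (BplusA A B).mkQ q V', ?_⟩
  -- Step 1: `DeltaBar x` as a list sum of `keyL` values
  have step1 : DeltaBar A B ((x : ↥B) : A)
      = (L.map fun p => keyL A B (comulB p.1 ⊗ₜ[ℂ] comulB p.2)).sum := by
    have h0 : DeltaBar A B ((x : ↥B) : A)
        = (DeltaBar A B ∘ₗ B.val.toLinearMap) x := rfl
    rw [h0, hx, map_list_sum, List.map_map]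
    refine congrArg List.sum (List.map_congr_left fun p _ => ?_)
    rw [Function.comp_apply, map_smul, LinearMap.comp_apply,
      keyL_pair A B comulB hcomulB p.1 p.2]
    congr 1
    exact deltaBar_plusB A B comulB hcomulB p.2
  -- Step 2: rewrite the sum through `lTensor gPrime`
  have step2 : DeltaBar A B ((x : ↥B) : A)
      = TensorProduct.map (BplusA A B).mkQ B.val.toLinearMap
          ((gPrime A B).lTensor A V) := by
    rw [step1, ← LinearMap.comp_apply, hV, map_list_sum, List.map_map]
    refine congrArg List.sum (List.map_congr_left fun p _ => ?_)
    rw [Function.comp_apply, LinearMap.comp_apply]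
    exact keyL_eq A B comulB p.1 p.2
  -- Step 3: substitute `V = lTensor subtype V'` and contract compositions
  have step3 : DeltaBar A B ((x : ↥B) : A)
      = TensorProduct.map (BplusA A B).mkQ
          (B.val.toLinearMap ∘ₗ gPrime A B ∘ₗ
            (LinearMap.ker (gDer A B δ)).subtype) V' := by
    rw [step2, ← hV', ← LinearMap.comp_apply ((gPrime A B).lTensor A),
      ← LinearMap.lTensor_comp]
    rw [← LinearMap.comp_apply]
    congr 1
    have h := TensorProduct.map_comp (BplusA A B).mkQ B.val.toLinearMap
      LinearMap.id (gPrime A B ∘ₗ (LinearMap.ker (gDer A B δ)).subtype)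
    simp only [LinearMap.comp_id] at h
    exact h.symm
  -- Step 4: factor through the codomain restriction
  rw [step3, ← LinearMap.subtype_comp_codRestrict
      (B.val.toLinearMap ∘ₗ gPrime A B ∘ₗ (LinearMap.ker (gDer A B δ)).subtype) s hq,
    ← hqdef]
  have h := TensorProduct.map_comp LinearMap.id s.subtype (BplusA A B).mkQ q
  simp only [LinearMap.id_comp] at h
  rw [h, LinearMap.comp_apply]

end
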